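/- A position M = (n_0, n_1, n_2, n_3, n_4, n_5) in extended circular nim ECN(6_{1,3}, 2) is a P-position if and only if n_0 ⊕ n_2 ⊕ n_4 = 0 and n_1 ⊕ n_3 ⊕ n_5 = 0, where ⊕ is bitwise XOR. -/

import Mathlib

/-- `IsN move x`: `x` is an N-position (next player wins) for the game with
move relation `move` (least fixed point; correct for short games). -/
inductive IsN {α : Type*} (move : α → α → Prop) : α → Prop
  | intro (x y : α) (hxy : move x y) (hy : ∀ z, move y z → IsN move z) : IsN move x

/-- `IsP move x`: `x` is a P-position (previous player wins) under normal play. -/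
def IsP {α : Type*} (move : α → α → Prop) (x : α) : Prop :=
  ∀ y, move x y → IsN move y

/-- Move relation of extended circular nim `ECN(m_S, k)`: reduce some piles,
all lying among `k` piles taken every `s`-th pile (for some `s ∈ S`) starting
at some index `i`, removing at least one token in total. -/
def ecnMove (m : ℕ) (S : Set ℕ) (k : ℕ) (x y : Fin m → ℕ) : Prop :=
  y ≠ x ∧ (∀ j, y j ≤ x j) ∧
    ∃ s ∈ S, ∃ i : ℕ, ∀ j : Fin m, y j ≠ x j → ∃ t < k, (j : ℕ) = (i + t * s) % m

/-- `cyc m Q n` : some cyclic rotation of `n`, or of its reversal, satisfies `Q`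
(the relation `M ∈_↻ P`). -/
def cyc (m : ℕ) (Q : (Fin m → ℕ) → Prop) (n : Fin m → ℕ) : Prop :=
  ∃ r : ℕ,
    Q (fun j => n ⟨(j.1 + r) % m, Nat.mod_lt _ (Nat.lt_of_le_of_lt (Nat.zero_le _) j.isLt)⟩) ∨
    Q (fun j => n ⟨(r + (m - j.1)) % m, Nat.mod_lt _ (Nat.lt_of_le_of_lt (Nat.zero_le _) j.isLt)⟩)

namespace ECN613Aux

open Function

abbrev Mv : (Fin 6 → ℕ) → (Fin 6 → ℕ) → Prop := ecnMove 6 {1, 3} 2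

abbrev PP (n : Fin 6 → ℕ) : Prop :=
  n 0 ^^^ n 2 ^^^ n 4 = 0 ∧ n 1 ^^^ n 3 ^^^ n 5 = 0

def msum (n : Fin 6 → ℕ) : ℕ := ∑ j, n j

lemma isN_not_isP {α : Type*} {move : α → α → Prop} {x : α} (hN : IsN move x) :
    ¬ IsP move x := by
  induction hN with
  | intro x y hxy hy ih =>
    intro hP
    obtain ⟨_, w, hyw, hw⟩ := hP y hxy
    exact ih w hyw hw

lemma move_lt {n y : Fin 6 → ℕ} (h : Mv n y) : msum y < msum n := by
  obtain ⟨hne, hle, -⟩ := h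
  obtain ⟨j, hj⟩ := Function.ne_iff.mp hne
  exact Finset.sum_lt_sum (fun i _ => hle i)
    ⟨j, Finset.mem_univ j, lt_of_le_of_ne (hle j) hj⟩

lemma xor3_left {a a' b c : ℕ} (h : a ^^^ b ^^^ c = 0) (h' : a' ^^^ b ^^^ c = 0) :
    a = a' := by
  rw [Nat.xor_assoc] at h h'
  have h1 := xor_eq_zero_iff.mp h
  have h2 := xor_eq_zero_iff.mp h'
  omega

lemma xor3_mid {a b b' c : ℕ} (h : a ^^^ b ^^^ c = 0) (h' : a ^^^ b' ^^^ c = 0) :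
    b = b' := by
  have h1 := xor_eq_zero_iff.mp h
  have h2 := xor_eq_zero_iff.mp h'
  exact Nat.xor_right_inj.mp (h1.trans h2.symm)

lemma xor3_right {a b c c' : ℕ} (h : a ^^^ b ^^^ c = 0) (h' : a ^^^ b ^^^ c' = 0) :
    c = c' := by
  have h1 := xor_eq_zero_iff.mp h
  have h2 := xor_eq_zero_iff.mp h'
  omega

lemma nim3 {a b c : ℕ} (h : a ^^^ b ^^^ c ≠ 0) :
    (∃ a' < a, a' ^^^ b ^^^ c = 0) ∨ (∃ b' < b, a ^^^ b' ^^^ c = 0) ∨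
      (∃ c' < c, a ^^^ b ^^^ c' = 0) := by
  rcases Nat.xor_trichotomy h with h1 | h1 | h1
  · left
    refine ⟨b ^^^ c, h1, ?_⟩
    rw [xor_eq_zero_iff, Nat.xor_comm b c, xor_cancel_right]
  · right; left
    refine ⟨c ^^^ a, h1, ?_⟩
    rw [xor_eq_zero_iff, Nat.xor_comm c a, xor_cancel_left]
  · right; right
    exact ⟨a ^^^ b, h1, Nat.xor_self _⟩

lemma changed_eq {s i : ℕ} (hs : s = 1 ∨ s = 3) {j j' : Fin 6}
    (h : ∃ t < 2, (j : ℕ) = (i + t * s) % 6) (h' : ∃ t < 2, (j' : ℕ) = (i + t * s) % 6)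
    (hpar : (j : ℕ) % 2 = (j' : ℕ) % 2) : j = j' := by
  obtain ⟨t, ht, hj⟩ := h
  obtain ⟨t', ht', hj'⟩ := h'
  apply Fin.ext
  rcases hs with rfl | rfl <;> omega

lemma moves_from_P {n y : Fin 6 → ℕ} (hP : PP n) (h : Mv n y) : ¬ PP y := by
  obtain ⟨hne, hle, s, hs, i, hmv⟩ := h
  have hs' : s = 1 ∨ s = 3 := by simpa using hs
  obtain ⟨j, hj⟩ := Function.ne_iff.mp hne
  intro hPy
  obtain ⟨hPe, hPo⟩ := hP
  obtain ⟨hye, hyo⟩ := hPy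
  have uniq : ∀ j' : Fin 6, y j' ≠ n j' → (j : ℕ) % 2 = (j' : ℕ) % 2 → j = j' :=
    fun j' hj' hpar => changed_eq hs' (hmv j hj) (hmv j' hj') hpar
  fin_cases j
  · have h2 : y 2 = n 2 := by
      by_contra hc; exact absurd (uniq 2 hc (by decide)) (by decide)
    have h4 : y 4 = n 4 := by
      by_contra hc; exact absurd (uniq 4 hc (by decide)) (by decide)
    rw [h2, h4] at hye
    exact hj (xor3_left hye hPe)
  · have h3 : y 3 = n 3 := by
      by_contra hc; exact absurd (uniq 3 hc (by decide)) (by decide)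
    have h5 : y 5 = n 5 := by
      by_contra hc; exact absurd (uniq 5 hc (by decide)) (by decide)
    rw [h3, h5] at hyo
    exact hj (xor3_left hyo hPo)
  · have h0 : y 0 = n 0 := by
      by_contra hc; exact absurd (uniq 0 hc (by decide)) (by decide)
    have h4 : y 4 = n 4 := by
      by_contra hc; exact absurd (uniq 4 hc (by decide)) (by decide)
    rw [h0, h4] at hye
    exact hj (xor3_mid hye hPe)
  · have h1 : y 1 = n 1 := by
      by_contra hc; exact absurd (uniq 1 hc (by decide)) (by decide)
    have h5 : y 5 = n 5 := by
      by_contra hc; exact absurd (uniq 5 hc (by decide)) (by decide)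
    rw [h1, h5] at hyo
    exact hj (xor3_mid hyo hPo)
  · have h0 : y 0 = n 0 := by
      by_contra hc; exact absurd (uniq 0 hc (by decide)) (by decide)
    have h2 : y 2 = n 2 := by
      by_contra hc; exact absurd (uniq 2 hc (by decide)) (by decide)
    rw [h0, h2] at hye
    exact hj (xor3_right hye hPe)
  · have h1 : y 1 = n 1 := by
      by_contra hc; exact absurd (uniq 1 hc (by decide)) (by decide)
    have h3 : y 3 = n 3 := by
      by_contra hc; exact absurd (uniq 3 hc (by decide)) (by decide)
    rw [h1, h3] at hyo
    exact hj (xor3_right hyo hPo)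

lemma pairing (a b : Fin 6) (h : (a : ℕ) % 2 ≠ (b : ℕ) % 2) :
    ∃ i : Fin 6,
      ((a : ℕ) = (i : ℕ) % 6 ∧ (b : ℕ) = ((i : ℕ) + 1) % 6) ∨
      ((b : ℕ) = (i : ℕ) % 6 ∧ (a : ℕ) = ((i : ℕ) + 1) % 6) ∨
      ((a : ℕ) = (i : ℕ) % 6 ∧ (b : ℕ) = ((i : ℕ) + 3) % 6) := by
  revert h; fin_cases a <;> fin_cases b <;> decide

lemma moveSingle (n : Fin 6 → ℕ) (a : Fin 6) (v : ℕ) (hv : v < n a) :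
    Mv n (update n a v) := by
  refine ⟨?_, ?_, 1, Set.mem_insert _ _, (a : ℕ), ?_⟩
  · intro hc
    have := congrFun hc a
    rw [update_self] at this
    omega
  · intro j
    rcases eq_or_ne j a with rfl | hne
    · rw [update_self]; omega
    · rw [update_of_ne hne]
  · intro j hjne
    have hja : j = a := by
      by_contra hc
      rw [update_of_ne hc] at hjne
      exact hjne rfl
    subst hja
    exact ⟨0, by omega, by simp [Nat.mod_eq_of_lt j.isLt]⟩

lemma moveDouble (n : Fin 6 → ℕ) (a b : Fin 6) (va vb : ℕ)
    (hpar : (a : ℕ) % 2 ≠ (b : ℕ) % 2)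
    (hva : va ≤ n a) (hvb : vb ≤ n b) (hstrict : va < n a ∨ vb < n b) :
    Mv n (update (update n a va) b vb) := by
  have hab : a ≠ b := fun hc => hpar (by rw [hc])
  have hchanged : ∀ j, update (update n a va) b vb j ≠ n j → j = a ∨ j = b := by
    intro j hjne
    by_cases hb : j = b
    · exact Or.inr hb
    by_cases ha : j = a
    · exact Or.inl ha
    exfalso
    rw [update_of_ne hb, update_of_ne ha] at hjne
    exact hjne rfl
  refine ⟨?_, ?_, ?_⟩
  · intro hc
    rcases hstrict with hst | hst
    · have := congrFun hc a
      rw [update_of_ne hab, update_self] at this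
      omega
    · have := congrFun hc b
      rw [update_self] at this
      omega
  · intro j
    by_cases hb : j = b
    · subst hb; rw [update_self]; exact hvb
    by_cases ha : j = a
    · subst ha; rw [update_of_ne hb, update_self]; exact hva
    · rw [update_of_ne hb, update_of_ne ha]
  · obtain ⟨i, hcase⟩ := pairing a b hpar
    rcases hcase with ⟨h1, h2⟩ | ⟨h1, h2⟩ | ⟨h1, h2⟩
    · refine ⟨1, Set.mem_insert _ _, (i : ℕ), ?_⟩
      intro j hjne
      rcases hchanged j hjne with rfl | rfl
      · exact ⟨0, by omega, by simpa using h1⟩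
      · exact ⟨1, by omega, by simpa using h2⟩
    · refine ⟨1, Set.mem_insert _ _, (i : ℕ), ?_⟩
      intro j hjne
      rcases hchanged j hjne with rfl | rfl
      · exact ⟨1, by omega, by simpa using h2⟩
      · exact ⟨0, by omega, by simpa using h1⟩
    · refine ⟨3, Set.mem_insert_of_mem _ rfl, (i : ℕ), ?_⟩
      intro j hjne
      rcases hchanged j hjne with rfl | rfl
      · exact ⟨0, by omega, by simpa using h1⟩
      · exact ⟨1, by omega, by simpa using h2⟩

lemma exists_move_to_P {n : Fin 6 → ℕ} (h : ¬ PP n) : ∃ y, Mv n y ∧ PP y := by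
  by_cases he : n 0 ^^^ n 2 ^^^ n 4 = 0 <;> by_cases ho : n 1 ^^^ n 3 ^^^ n 5 = 0
  · exact absurd ⟨he, ho⟩ h
  · rcases nim3 ho with ⟨v, hv, hx⟩ | ⟨v, hv, hx⟩ | ⟨v, hv, hx⟩
    · exact ⟨update n 1 v, moveSingle n 1 v hv, by
        refine ⟨?_, ?_⟩ <;> simp (config := { decide := true }) only [update_apply]
        · exact he
        · exact hx⟩
    · exact ⟨update n 3 v, moveSingle n 3 v hv, by
        refine ⟨?_, ?_⟩ <;> simp (config := { decide := true }) only [update_apply]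
        · exact he
        · exact hx⟩
    · exact ⟨update n 5 v, moveSingle n 5 v hv, by
        refine ⟨?_, ?_⟩ <;> simp (config := { decide := true }) only [update_apply]
        · exact he
        · exact hx⟩
  · rcases nim3 he with ⟨v, hv, hx⟩ | ⟨v, hv, hx⟩ | ⟨v, hv, hx⟩
    · exact ⟨update n 0 v, moveSingle n 0 v hv, by
        refine ⟨?_, ?_⟩ <;> simp (config := { decide := true }) only [update_apply]
        · exact hx
        · exact ho⟩
    · exact ⟨update n 2 v, moveSingle n 2 v hv, by
        refine ⟨?_, ?_⟩ <;> simp (config := { decide := true }) only [update_apply]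
        · exact hx
        · exact ho⟩
    · exact ⟨update n 4 v, moveSingle n 4 v hv, by
        refine ⟨?_, ?_⟩ <;> simp (config := { decide := true }) only [update_apply]
        · exact hx
        · exact ho⟩
  · rcases nim3 he with ⟨v, hv, hx⟩ | ⟨v, hv, hx⟩ | ⟨v, hv, hx⟩ <;>
      rcases nim3 ho with ⟨w, hw, hy⟩ | ⟨w, hw, hy⟩ | ⟨w, hw, hy⟩
    · exact ⟨update (update n 0 v) 1 w,
        moveDouble n 0 1 v w (by decide) hv.le hw.le (Or.inl hv), by
        refine ⟨?_, ?_⟩ <;> simp (config := { decide := true }) only [update_apply]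
        · exact hx
        · exact hy⟩
    · exact ⟨update (update n 0 v) 3 w,
        moveDouble n 0 3 v w (by decide) hv.le hw.le (Or.inl hv), by
        refine ⟨?_, ?_⟩ <;> simp (config := { decide := true }) only [update_apply]
        · exact hx
        · exact hy⟩
    · exact ⟨update (update n 0 v) 5 w,
        moveDouble n 0 5 v w (by decide) hv.le hw.le (Or.inl hv), by
        refine ⟨?_, ?_⟩ <;> simp (config := { decide := true }) only [update_apply]
        · exact hx
        · exact hy⟩
    · exact ⟨update (update n 2 v) 1 w,
        moveDouble n 2 1 v w (by decide) hv.le hw.le (Or.inl hv), by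
        refine ⟨?_, ?_⟩ <;> simp (config := { decide := true }) only [update_apply]
        · exact hx
        · exact hy⟩
    · exact ⟨update (update n 2 v) 3 w,
        moveDouble n 2 3 v w (by decide) hv.le hw.le (Or.inl hv), by
        refine ⟨?_, ?_⟩ <;> simp (config := { decide := true }) only [update_apply]
        · exact hx
        · exact hy⟩
    · exact ⟨update (update n 2 v) 5 w,
        moveDouble n 2 5 v w (by decide) hv.le hw.le (Or.inl hv), by
        refine ⟨?_, ?_⟩ <;> simp (config := { decide := true }) only [update_apply]
        · exact hx
        · exact hy⟩
    · exact ⟨update (update n 4 v) 1 w,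
        moveDouble n 4 1 v w (by decide) hv.le hw.le (Or.inl hv), by
        refine ⟨?_, ?_⟩ <;> simp (config := { decide := true }) only [update_apply]
        · exact hx
        · exact hy⟩
    · exact ⟨update (update n 4 v) 3 w,
        moveDouble n 4 3 v w (by decide) hv.le hw.le (Or.inl hv), by
        refine ⟨?_, ?_⟩ <;> simp (config := { decide := true }) only [update_apply]
        · exact hx
        · exact hy⟩
    · exact ⟨update (update n 4 v) 5 w,
        moveDouble n 4 5 v w (by decide) hv.le hw.le (Or.inl hv), by
        refine ⟨?_, ?_⟩ <;> simp (config := { decide := true }) only [update_apply]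
        · exact hx
        · exact hy⟩

lemma main : ∀ N : ℕ, ∀ n : Fin 6 → ℕ, msum n < N →
    (PP n → IsP Mv n) ∧ (¬ PP n → IsN Mv n) := by
  intro N
  induction N with
  | zero => intro n hn; exact absurd hn (Nat.not_lt_zero _)
  | succ N ih =>
    intro n hn
    constructor
    · intro hP y hy
      have hlt : msum y < N := lt_of_lt_of_le (move_lt hy) (Nat.lt_succ_iff.mp hn)
      exact (ih y hlt).2 (moves_from_P hP hy)
    · intro hnP
      obtain ⟨y, hy, hPy⟩ := exists_move_to_P hnP
      have hlt : msum y < N := lt_of_lt_of_le (move_lt hy) (Nat.lt_succ_iff.mp hn)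
      refine IsN.intro n y hy fun z hz => ?_
      have hz' : msum z < N := lt_trans (move_lt hz) hlt
      exact (ih z hz').2 (moves_from_P hPy hz)

end ECN613Aux

theorem ecn6_13_2_P_iff (n : Fin 6 → ℕ) :
    IsP (ecnMove 6 {1, 3} 2) n ↔
      n 0 ^^^ n 2 ^^^ n 4 = 0 ∧ n 1 ^^^ n 3 ^^^ n 5 = 0 := by
  constructor
  · intro hP
    by_contra h
    exact ECN613Aux.isN_not_isP
      ((ECN613Aux.main (ECN613Aux.msum n + 1) n (Nat.lt_succ_self _)).2 h) hP
  · intro h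
    exact (ECN613Aux.main (ECN613Aux.msum n + 1) n (Nat.lt_succ_self _)).1 h
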